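/- Let T > 0 and let m be a finite nonnegative Borel measure on [0,T]. Suppose that for every continuously differentiable function f : [0,T] → ℝ one has ∫_{[0,T]} f'(t) dm(t) = f(T) − f(0). Then m equals the restriction of the Lebesgue measure to [0,T]. -/

import Mathlib

open MeasureTheory

open Set Filter Topology

/-- If a finite nonnegative Borel measure `m` on `[0,T]` satisfies
`∫ f' dm = f T - f 0` for every `C¹` function `f`, then `m` is the
restriction of Lebesgue measure to `[0,T]`. -/
theorem stmt0 (T : ℝ) (hT : 0 < T) (m : Measure ℝ) [IsFiniteMeasure m]
    (hsupp : m (Set.Icc 0 T)ᶜ = 0)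
    (h : ∀ f : ℝ → ℝ, ContDiff ℝ 1 f → ∫ t, deriv f t ∂m = f T - f 0) :
    m = volume.restrict (Set.Icc 0 T) := by
  -- total mass
  have htot : m Set.univ = ENNReal.ofReal T := by
    have h1 := h id contDiff_id
    simp only [id] at h1
    rw [show (fun t : ℝ => deriv id t) = fun _ => (1:ℝ) from funext fun t => deriv_id t] at h1
    rw [integral_const, smul_eq_mul, mul_one, sub_zero] at h1
    rw [← h1, measureReal_def, ENNReal.ofReal_toReal (measure_ne_top m _)]
  -- key: m (Iio a) = ofReal a for 0 < a ≤ T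
  have key : ∀ a : ℝ, 0 < a → a ≤ T → m (Iio a) = ENNReal.ofReal a := by
    intro a ha haT
    set g : ℕ → ℝ → ℝ := fun n s => max 0 (min 1 ((n : ℝ) * (a - s))) with hg
    have hgc : ∀ n, Continuous (g n) :=
      fun n => continuous_const.max (continuous_const.min (by fun_prop))
    have hg01 : ∀ n s, 0 ≤ g n s ∧ g n s ≤ 1 := by
      intro n s
      refine ⟨le_max_left _ _, max_le (by norm_num) (min_le_left _ _)⟩
    set f : ℕ → ℝ → ℝ := fun n t => ∫ s in (0:ℝ)..t, g n s with hf
    have hderiv : ∀ n t, deriv (f n) t = g n t := fun n t => (hgc n).deriv_integral _ 0 t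
    have hcd : ∀ n, ContDiff ℝ 1 (f n) := by
      intro n
      rw [contDiff_one_iff_deriv]
      refine ⟨fun t => ((hgc n).integral_hasStrictDerivAt 0 t).hasDerivAt.differentiableAt, ?_⟩
      have : deriv (f n) = g n := funext (hderiv n)
      rw [this]; exact hgc n
    have heq : ∀ n, ∫ t, g n t ∂m = ∫ s in Ioc (0:ℝ) T, g n s := by
      intro n
      have h2 := h (f n) (hcd n)
      simp only [hderiv n] at h2
      rw [h2]
      simp only [hf, intervalIntegral.integral_same, sub_zero]
      rw [intervalIntegral.integral_of_le hT.le]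
    -- pointwise limit
    have hlim : ∀ s : ℝ, Tendsto (fun n => g n s) atTop (𝓝 ((Iio a).indicator (1 : ℝ → ℝ) s)) := by
      intro s
      rcases lt_or_ge s a with hs | hs
      · rw [Set.indicator_of_mem (mem_Iio.mpr hs) (1 : ℝ → ℝ)]
        simp only [Pi.one_apply]
        have : ∀ᶠ n in atTop, g n s = 1 := by
          filter_upwards [eventually_ge_atTop ⌈1 / (a - s)⌉₊] with n hn
          have has : 0 < a - s := sub_pos.mpr hs
          have : (1:ℝ) ≤ (n:ℝ) * (a - s) := by
            rw [← div_le_iff₀ has]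
            calc (1:ℝ) / (a - s) ≤ (⌈1 / (a - s)⌉₊ : ℝ) := Nat.le_ceil _
              _ ≤ n := Nat.cast_le.mpr hn
          simp [hg, min_eq_left this, max_eq_right (zero_le_one' ℝ)]
        exact Tendsto.congr' (this.mono fun n hn => hn.symm) tendsto_const_nhds
      · rw [Set.indicator_of_notMem (by simpa using not_lt.mpr hs) (1 : ℝ → ℝ)]
        have : ∀ n, g n s = 0 := by
          intro n
          have h1 : (n:ℝ) * (a - s) ≤ 0 :=
            mul_nonpos_of_nonneg_of_nonpos (Nat.cast_nonneg n) (sub_nonpos.mpr hs)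
          have : min 1 ((n:ℝ) * (a - s)) ≤ 0 := le_trans (min_le_right _ _) h1
          simp [hg, max_eq_left this]
        simp only [this]; exact tendsto_const_nhds
    have hbound : ∀ (μ : Measure ℝ) [IsFiniteMeasure μ],
        Tendsto (fun n => ∫ s, g n s ∂μ) atTop
          (𝓝 (∫ s, (Iio a).indicator (1 : ℝ → ℝ) s ∂μ)) := by
      intro μ _
      refine tendsto_integral_of_dominated_convergence (fun _ => (1:ℝ))
        (fun n => (hgc n).aestronglyMeasurable) (integrable_const 1) ?_ ?_
      · intro n
        filter_upwards with s
        rw [Real.norm_eq_abs, abs_of_nonneg (hg01 n s).1]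
        exact (hg01 n s).2
      · filter_upwards with s using hlim s
    have hL := hbound m
    have hR := hbound (volume.restrict (Ioc 0 T))
    rw [show (fun n => ∫ s, g n s ∂m) = fun n => ∫ s in Ioc (0:ℝ) T, g n s from funext heq] at hL
    have huniq := tendsto_nhds_unique hL hR
    rw [integral_indicator_one measurableSet_Iio, integral_indicator_one measurableSet_Iio,
      measureReal_def, measureReal_def, Measure.restrict_apply measurableSet_Iio] at huniq
    have hset : Iio a ∩ Ioc 0 T = Ioo 0 a := by
      ext x
      simp only [mem_inter_iff, mem_Iio, mem_Ioc, mem_Ioo]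
      constructor
      · rintro ⟨h1, h2, _⟩; exact ⟨h2, h1⟩
      · rintro ⟨h1, h2⟩; exact ⟨h2, h1, le_trans h2.le haT⟩
    rw [hset, Real.volume_Ioo, sub_zero, ENNReal.toReal_ofReal ha.le] at huniq
    rw [← ENNReal.ofReal_toReal (measure_ne_top m (Iio a)), huniq]
  have hIic : ∀ a : ℝ, m (Iic a) = (volume.restrict (Icc 0 T)) (Iic a) := by
    intro a
    rw [Measure.restrict_apply measurableSet_Iic]
    rcases lt_or_ge a 0 with ha | ha
    · have h1 : m (Iic a) = 0 := by
        refine measure_mono_null ?_ hsupp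
        intro x hx
        simp only [mem_compl_iff, mem_Icc, not_and, not_le]
        intro h0
        exact absurd (le_trans h0 (mem_Iic.mp hx)) (not_le.mpr ha)
      have h2 : Iic a ∩ Icc 0 T = ∅ := by
        ext x
        simp only [mem_inter_iff, mem_Iic, mem_Icc, mem_empty_iff_false, iff_false, not_and]
        intro h1 h2
        linarith
      rw [h1, h2, measure_empty]
    · rcases lt_or_ge a T with haT | haT
      · -- 0 ≤ a < T
        have hrT : (m (Iic a)).toReal ≤ T := by
          have := measure_mono (subset_univ (Iic a)) (μ := m)
          rw [htot] at this
          calc (m (Iic a)).toReal ≤ (ENNReal.ofReal T).toReal :=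
                ENNReal.toReal_mono (by simp) this
            _ = T := ENNReal.toReal_ofReal hT.le
        have hub : (m (Iic a)).toReal ≤ a := by
          refine le_of_forall_gt_imp_ge_of_dense ?_
          intro c hc
          rcases le_or_gt c T with hcT | hcT
          · have hc0 : 0 < c := lt_of_le_of_lt ha hc
            have hk := key c hc0 hcT
            have hmono : m (Iic a) ≤ m (Iio c) :=
              measure_mono fun x hx => lt_of_le_of_lt (mem_Iic.mp hx) hc
            rw [hk] at hmono
            calc (m (Iic a)).toReal ≤ (ENNReal.ofReal c).toReal :=
                  ENNReal.toReal_mono (by simp) hmono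
              _ = c := ENNReal.toReal_ofReal hc0.le
          · exact le_trans hrT hcT.le
        have hub' : m (Iic a) ≤ ENNReal.ofReal a :=
          (ENNReal.le_ofReal_iff_toReal_le (measure_ne_top m _) ha).mpr hub
        have hlb : ENNReal.ofReal a ≤ m (Iic a) := by
          rcases eq_or_lt_of_le ha with ha0 | ha0
          · simp [← ha0]
          · rw [← key a ha0 haT.le]
            exact measure_mono fun x hx => le_of_lt (mem_Iio.mp hx)
        have h2 : Iic a ∩ Icc 0 T = Icc 0 a := by
          ext x
          simp only [mem_inter_iff, mem_Iic, mem_Icc]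
          constructor
          · rintro ⟨h1, h2, _⟩; exact ⟨h2, h1⟩
          · rintro ⟨h1, h2⟩; exact ⟨h2, h1, le_trans h2 haT.le⟩
        rw [le_antisymm hub' hlb, h2, Real.volume_Icc, sub_zero]
      · -- T ≤ a
        have h0 : m (Ioi a) = 0 := by
          refine measure_mono_null ?_ hsupp
          intro x hx
          simp only [mem_compl_iff, mem_Icc, not_and, not_le]
          intro _
          exact lt_of_le_of_lt haT (mem_Ioi.mp hx)
        have h1 : m (Iic a) = ENNReal.ofReal T := by
          refine le_antisymm (htot ▸ measure_mono (subset_univ _)) ?_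
          rw [← htot, ← Iic_union_Ioi (a := a)]
          calc m (Iic a ∪ Ioi a) ≤ m (Iic a) + m (Ioi a) := measure_union_le _ _
            _ = m (Iic a) := by rw [h0, add_zero]
        have h2 : Iic a ∩ Icc 0 T = Icc 0 T :=
          inter_eq_right.mpr fun x hx => le_trans (mem_Icc.mp hx).2 haT
        rw [h1, h2, Real.volume_Icc, sub_zero]
  exact Measure.ext_of_Iic m _ hIic
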